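/- Termination of the concrete garbage collection machine: for any finite store σ and any finite initial grey set G ⊆ dom(σ), the GC transition system ⟨G, B, σ⟩ ↦ ⟨(G ∪ LL(σ(a))) ∖ (B ∪ {a}), B ∪ {a}, σ⟩ (for a ∈ G) terminates in at most |dom(σ)| steps in a state with empty grey set, and the final black set B is exactly the set of addresses reachable from G via the live-locations function. -/
import Mathlib


/- Statement 12: termination and correctness of the concrete GC machine. -/

/-- Exactly-n-step iteration of a relation. -/
def StepN {α : Type _} (r : α → α → Prop) : ℕ → α → α → Prop
  | 0, a, b => a = b
  | n + 1, a, b => ∃ c, r a c ∧ StepN r n c b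

/-- One step of the GC machine: pick a grey address `a`, blacken it, and add
    its live locations (minus the visited ones) to the grey set. -/
inductive GCStep {Addr Storable : Type} [DecidableEq Addr]
    (σ : Addr → Option Storable) (LL : Storable → Finset Addr) :
    Finset Addr × Finset Addr → Finset Addr × Finset Addr → Prop
  | step {G B : Finset Addr} {a : Addr} {s : Storable} :
      a ∈ G → σ a = some s →
      GCStep σ LL (G, B) ((G ∪ LL s) \ (B ∪ {a}), B ∪ {a})

/-- Addresses reachable from `G` via the live-locations function: the least
    set containing `G` and closed under `a ↦ LL (σ a)`. -/
inductive GCReach {Addr Storable : Type}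
    (σ : Addr → Option Storable) (LL : Storable → Finset Addr)
    (G : Finset Addr) : Addr → Prop
  | base {a : Addr} : a ∈ G → GCReach σ LL G a
  | step {a : Addr} {s : Storable} {b : Addr} :
      GCReach σ LL G a → σ a = some s → b ∈ LL s → GCReach σ LL G b

lemma gcreach_trans {Addr Storable : Type} (σ : Addr → Option Storable)
    (LL : Storable → Finset Addr) {H K : Finset Addr}
    (h : ∀ g ∈ H, GCReach σ LL K g) {a : Addr}
    (ha : GCReach σ LL H a) : GCReach σ LL K a := by
  induction ha with
  | base hb => exact h _ hb
  | step _ hs hb ih => exact GCReach.step ih hs hb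

lemma gc_aux {Addr Storable : Type} [DecidableEq Addr]
    (σ : Addr → Option Storable) (LL : Storable → Finset Addr)
    (dom : Finset Addr) (hdom : ∀ a, a ∈ dom ↔ (σ a).isSome)
    (hclosed : ∀ a s, σ a = some s → LL s ⊆ dom) :
    ∀ m (G B : Finset Addr), (dom \ B).card ≤ m → G ⊆ dom → B ⊆ dom →
      Disjoint G B → (∀ b ∈ B, ∀ s, σ b = some s → LL s ⊆ G ∪ B) →
      ∃ n ≤ (dom \ B).card, ∃ B' : Finset Addr,
        StepN (GCStep σ LL) n (G, B) (∅, B') ∧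
        G ∪ B ⊆ B' ∧
        (∀ a ∈ B', GCReach σ LL (G ∪ B) a) ∧
        (∀ b ∈ B', ∀ s, σ b = some s → LL s ⊆ B') := by
  intro m
  induction m with
  | zero =>
    intro G B hm hG hB hdisj hcl
    have hGempty : G = ∅ := by
      have : dom \ B = ∅ := Finset.card_eq_zero.mp (Nat.le_zero.mp hm)
      by_contra h
      obtain ⟨a, ha⟩ := Finset.nonempty_iff_ne_empty.mpr h
      have : a ∈ dom \ B := Finset.mem_sdiff.mpr ⟨hG ha, Finset.disjoint_left.mp hdisj ha⟩
      simp [‹dom \ B = ∅›] at this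
    subst hGempty
    refine ⟨0, Nat.zero_le _, B, rfl, by simp, fun a ha => GCReach.base (by simpa using ha),
      fun b hb s hs => by simpa using hcl b hb s hs⟩
  | succ m ih =>
    intro G B hm hG hB hdisj hcl
    rcases Finset.eq_empty_or_nonempty G with hGe | ⟨a, ha⟩
    · subst hGe
      refine ⟨0, Nat.zero_le _, B, rfl, by simp, fun a ha => GCReach.base (by simpa using ha),
        fun b hb s hs => by simpa using hcl b hb s hs⟩
    · have hasome : (σ a).isSome := (hdom a).mp (hG ha)
      obtain ⟨s, hs⟩ := Option.isSome_iff_exists.mp hasome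
      set G' := (G ∪ LL s) \ (B ∪ {a}) with hG'
      set B' := B ∪ {a} with hB'
      have hLLdom : LL s ⊆ dom := hclosed a s hs
      have hG'dom : G' ⊆ dom := by
        intro x hx
        rcases Finset.mem_union.mp (Finset.mem_sdiff.mp hx).1 with h | h
        · exact hG h
        · exact hLLdom h
      have hB'dom : B' ⊆ dom := by
        intro x hx
        rcases Finset.mem_union.mp hx with h | h
        · exact hB h
        · exact hG (Finset.mem_singleton.mp h ▸ ha)
      have hdisj' : Disjoint G' B' := by
        simp only [hG', Finset.disjoint_left]
        intro x hx
        exact (Finset.mem_sdiff.mp hx).2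
      have hsub : G ∪ B ⊆ G' ∪ B' := by
        intro x hx
        by_cases hxB : x ∈ B ∪ {a}
        · exact Finset.mem_union_right _ hxB
        · rcases Finset.mem_union.mp hx with h | h
          · exact Finset.mem_union_left _ (Finset.mem_sdiff.mpr ⟨Finset.mem_union_left _ h, hxB⟩)
          · exact absurd (Finset.mem_union_left _ h) hxB
      have hLLsub : LL s ⊆ G' ∪ B' := by
        intro x hx
        by_cases hxB : x ∈ B ∪ {a}
        · exact Finset.mem_union_right _ hxB
        · exact Finset.mem_union_left _ (Finset.mem_sdiff.mpr ⟨Finset.mem_union_right _ hx, hxB⟩)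
      have hcl' : ∀ b ∈ B', ∀ t, σ b = some t → LL t ⊆ G' ∪ B' := by
        intro b hb t ht
        rcases Finset.mem_union.mp hb with h | h
        · exact (hcl b h t ht).trans hsub
        · have : b = a := Finset.mem_singleton.mp h
          subst this
          rw [hs] at ht
          injection ht with ht; subst ht
          exact hLLsub
      have hamem : a ∈ dom \ B :=
        Finset.mem_sdiff.mpr ⟨hG ha, Finset.disjoint_left.mp hdisj ha⟩
      have hcard : (dom \ B').card < (dom \ B).card := by
        apply Finset.card_lt_card
        constructor
        · intro x hx
          rcases Finset.mem_sdiff.mp hx with ⟨h1, h2⟩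
          exact Finset.mem_sdiff.mpr ⟨h1, fun hxB => h2 (Finset.mem_union_left _ hxB)⟩
        · intro hsub'
          have := hsub' hamem
          simp [hB'] at this
      have hm' : (dom \ B').card ≤ m := Nat.lt_succ_iff.mp (lt_of_lt_of_le hcard hm)
      obtain ⟨n, hn, B'', hstep, hsub'', hreach, hclB''⟩ :=
        ih G' B' hm' hG'dom hB'dom hdisj' hcl'
      refine ⟨n + 1, ?_, B'', ⟨(G', B'), GCStep.step ha hs, hstep⟩,
        hsub.trans hsub'', ?_, hclB''⟩
      · exact Nat.succ_le_of_lt (lt_of_le_of_lt hn hcard)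
      · intro x hx
        refine gcreach_trans σ LL ?_ (hreach x hx)
        intro g hg
        rcases Finset.mem_union.mp hg with h | h
        · rcases Finset.mem_union.mp (Finset.mem_sdiff.mp h).1 with h2 | h2
          · exact GCReach.base (Finset.mem_union_left _ h2)
          · exact GCReach.step (GCReach.base (Finset.mem_union_left _ ha)) hs h2
        · rcases Finset.mem_union.mp h with h2 | h2
          · exact GCReach.base (Finset.mem_union_right _ h2)
          · exact GCReach.base (Finset.mem_union_left _ (Finset.mem_singleton.mp h2 ▸ ha))

theorem gc_terminates {Addr Storable : Type} [DecidableEq Addr]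
    (σ : Addr → Option Storable) (LL : Storable → Finset Addr)
    (dom : Finset Addr) (hdom : ∀ a, a ∈ dom ↔ (σ a).isSome)
    (hclosed : ∀ a s, σ a = some s → LL s ⊆ dom)
    (G : Finset Addr) (hG : G ⊆ dom) :
    ∃ n ≤ dom.card, ∃ B : Finset Addr,
      StepN (GCStep σ LL) n (G, ∅) (∅, B) ∧
      ∀ a, a ∈ B ↔ GCReach σ LL G a := by
  obtain ⟨n, hn, B, hstep, hsub, hreach, hcl⟩ :=
    gc_aux σ LL dom hdom hclosed (dom \ ∅).card G ∅ le_rfl hG (Finset.empty_subset _)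
      (Finset.disjoint_empty_right G) (by simp)
  refine ⟨n, le_trans hn (by simp), B, hstep, fun a => ⟨fun ha => ?_, fun ha => ?_⟩⟩
  · have := hreach a ha
    simpa using this
  · induction ha with
    | base hb => exact hsub (by simpa using hb)
    | step _ hs hb ih => exact hcl _ ih _ hs hb
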